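/- Suppose positive integers m_1, t_1, k satisfy k ≥ 2 and 0 ≤ t_1 ≤ k - 2. Then there exist an integer ℓ ≥ 2 and integers m_2 = ℓ(m_1 + 1) - 2 ≥ 1 and t_2 = 2k - 1 - ℓ(k - 1 - t_1) with 0 ≤ t_2 ≤ k - 1 such that, setting n_1 = m_1 k + 1 + t_1 and n_2 = m_2 k + 1 + t_2, one has (t_1 + 1 - k)/(k · n_1) = (t_2 + 1 - 2k)/(k · n_2). -/

import Mathlib

/-- given integers `m₁ ≥ 1`, `k ≥ 2`, `0 ≤ t₁ ≤ k-2`, there exist `ℓ ≥ 2`,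
`m₂ = ℓ(m₁+1) - 2 ≥ 1` and `t₂ = 2k - 1 - ℓ(k-1-t₁)` with `0 ≤ t₂ ≤ k-1` such that,
with `n₁ = m₁k + 1 + t₁` and `n₂ = m₂k + 1 + t₂`,
`(t₁ + 1 - k)/(k·n₁) = (t₂ + 1 - 2k)/(k·n₂)`. -/
theorem stmt19 (m₁ t₁ k : ℤ) (hm₁ : 1 ≤ m₁) (hk : 2 ≤ k)
    (ht₁ : 0 ≤ t₁) (ht₁' : t₁ ≤ k - 2) :
    ∃ ℓ m₂ t₂ : ℤ, 2 ≤ ℓ ∧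
      m₂ = ℓ * (m₁ + 1) - 2 ∧ 1 ≤ m₂ ∧
      t₂ = 2 * k - 1 - ℓ * (k - 1 - t₁) ∧ 0 ≤ t₂ ∧ t₂ ≤ k - 1 ∧
      ((t₁ : ℝ) + 1 - k) / ((k : ℝ) * ((m₁ : ℝ) * k + 1 + t₁))
        = ((t₂ : ℝ) + 1 - 2 * k) / ((k : ℝ) * ((m₂ : ℝ) * k + 1 + t₂)) := by
  set d : ℤ := k - 1 - t₁ with hd_def
  have hd1 : 1 ≤ d := by omega
  have hd0 : 0 < d := hd1
  set ℓ : ℤ := (2 * k - 1) / d with hl_def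
  have hl2 : 2 ≤ ℓ := by
    rw [hl_def, Int.le_ediv_iff_mul_le hd0]; omega
  have hdiv := Int.mul_ediv_add_emod (2 * k - 1) d
  have hr0 := Int.emod_nonneg (2 * k - 1) (ne_of_gt hd0)
  have hr1 := Int.emod_lt_of_pos (2 * k - 1) hd0
  have hld_le : ℓ * d ≤ 2 * k - 1 := by rw [hl_def, mul_comm]; omega
  have hld_ge : k ≤ ℓ * d := by rw [hl_def, mul_comm]; omega
  refine ⟨ℓ, ℓ * (m₁ + 1) - 2, 2 * k - 1 - ℓ * d, hl2, rfl, ?_, rfl, by omega, by omega, ?_⟩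
  · nlinarith
  · have hn1 : (0 : ℤ) < m₁ * k + 1 + t₁ := by nlinarith
    have hn2 : (0 : ℤ) < (ℓ * (m₁ + 1) - 2) * k + 1 + (2 * k - 1 - ℓ * d) := by
      have : (ℓ * (m₁ + 1) - 2) * k + 1 + (2 * k - 1 - ℓ * d) = ℓ * (m₁ * k + 1 + t₁) := by
        rw [hd_def]; ring
      rw [this]; positivity
    have hk0 : (0 : ℝ) < (k : ℝ) := by exact_mod_cast by omega
    have hn1R : (0 : ℝ) < (m₁ : ℝ) * k + 1 + t₁ := by exact_mod_cast hn1
    have hn2R : (0 : ℝ) <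
        ((ℓ * (m₁ + 1) - 2 : ℤ) : ℝ) * k + 1 + ((2 * k - 1 - ℓ * d : ℤ) : ℝ) := by
      exact_mod_cast hn2
    rw [div_eq_div_iff (by positivity) (by positivity)]
    rw [hd_def]
    push_cast
    ring
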